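/- Let O be a Dedekind domain, μ a nonzero ideal with μ^{N−1} = (z), and A_N = ⊕_{j=0}^{N−1} μ^j X^j ⊆ K[X]/(X^N) as above. Define ε : A_N → K by ε(X^{N−1}) = z⁻¹ and ε(X^m) = 0 for 0 ≤ m < N−1, extended K-linearly and restricted to A_N. Then ε maps A_N into O, and the induced map ε̃ : A_N → Hom_O(A_N, O), ε̃(x)(y) = ε(xy), is an isomorphism of O-modules; i.e., A_N is a Frobenius O-algebra. -/

import Mathlib

/-- Truncated (mod `X^N`) multiplication on `K[X]/(X^N)`, realized on coefficient
vectors `Fin N → K`. -/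
def truncMul {K : Type*} [Field K] {N : ℕ} (p q : Fin N → K) : Fin N → K :=
  fun j => ∑ i : Fin N, ∑ k : Fin N, if (i : ℕ) + (k : ℕ) = (j : ℕ) then p i * q k else 0

/-- For a nonzero ideal `μ` of a Dedekind domain `O` with `μ^{N−1} = (z)`, the
`O`-subalgebra `A_N = O·1 ⊕ μX ⊕ … ⊕ μ^{N−1}X^{N−1}` of `K[X]/(X^N)` with trace
`ε(X^{N−1}) = z⁻¹`, `ε(X^m) = 0` for `m < N−1`, is Frobenius: `ε` takes values in
`O` on `A_N`, and every `O`-linear functional on `A_N` is `y ↦ ε(xy)` for a unique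
`x ∈ A_N`. -/
theorem stmt18 (O : Type*) [CommRing O] [IsDomain O] [IsDedekindDomain O]
    (K : Type*) [Field K] [Algebra O K] [IsFractionRing O K]
    (μ : Ideal O) (hμ : μ ≠ ⊥) (N : ℕ) (hN : 2 ≤ N)
    (z : O) (hz : μ ^ (N - 1) = Ideal.span {z}) :
    let f : O → K := algebraMap O K
    let O1 : Submodule O K := LinearMap.range (Algebra.linearMap O K)
    let AN : Submodule O (Fin N → K) :=
      Submodule.pi Set.univ fun j : Fin N =>
        Submodule.map (Algebra.linearMap O K) (μ ^ (j : ℕ))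
    let ε : (Fin N → K) → K :=
      fun p => (f z)⁻¹ * p ⟨N - 1, Nat.sub_lt (by omega) Nat.one_pos⟩
    (∀ p : AN, ε (p : Fin N → K) ∈ O1) ∧
    (∀ φ : AN →ₗ[O] O, ∃! x : AN, ∀ y : AN,
        f (φ y) = ε (truncMul (x : Fin N → K) (y : Fin N → K))) := by
  intro f O1 AN ε
  classical
  have finj : Function.Injective f := IsFractionRing.injective O K
  have hANmem : ∀ v : Fin N → K, v ∈ AN ↔
      ∀ j : Fin N, ∃ b ∈ μ ^ (j : ℕ), f b = v j := by
    intro v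
    constructor
    · intro hv j
      rcases (Submodule.mem_pi.mp hv) j (Set.mem_univ j) with ⟨b, hb, hb'⟩
      exact ⟨b, hb, hb'⟩
    · intro hv
      refine Submodule.mem_pi.mpr fun j _ => ?_
      rcases hv j with ⟨b, hb, hb'⟩
      exact ⟨b, hb, hb'⟩
  obtain ⟨a, haμ, ha0⟩ := (Submodule.ne_bot_iff μ).mp hμ
  have hz0 : z ≠ 0 := by
    intro h
    have h1 : a ^ (N - 1) ∈ μ ^ (N - 1) := Ideal.pow_mem_pow haμ _
    rw [hz, Ideal.mem_span_singleton'] at h1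
    obtain ⟨u, hu⟩ := h1
    exact pow_ne_zero _ ha0 (by rw [← hu, h, mul_zero])
  have hfz0 : f z ≠ 0 := fun h => hz0 (finj (h.trans (map_zero (algebraMap O K)).symm))
  have hfmul : ∀ x y : O, f (x * y) = f x * f y := fun x y => map_mul (algebraMap O K) x y
  have hfadd : ∀ x y : O, f (x + y) = f x + f y := fun x y => map_add (algebraMap O K) x y
  have hfsum : ∀ (s : Finset (Fin N)) (g : Fin N → O),
      f (∑ i ∈ s, g i) = ∑ i ∈ s, f (g i) := fun s g => map_sum (algebraMap O K) g s
  have hN1 : N - 1 < N := by omega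
  have hεdef : ∀ v : Fin N → K, ε v = (f z)⁻¹ * v ⟨N - 1, hN1⟩ := fun _ => rfl
  let sig : Fin N → Fin N := fun i => ⟨N - 1 - (i : ℕ), by omega⟩
  have hsig : ∀ i : Fin N, (i : ℕ) + ((sig i : Fin N) : ℕ) = N - 1 := by
    intro i; have := i.isLt; simp only [sig]; omega
  have hsigsig : Function.Involutive sig := by
    intro i; have := i.isLt; apply Fin.ext; simp only [sig]; omega
  constructor
  · intro p
    obtain ⟨b, hb, hfb⟩ := (hANmem p.1 |>.mp p.2) ⟨N - 1, hN1⟩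
    rw [show ((⟨N - 1, hN1⟩ : Fin N) : ℕ) = N - 1 from rfl, hz,
      Ideal.mem_span_singleton'] at hb
    obtain ⟨c, hc⟩ := hb
    have he : ε (p : Fin N → K) = f c := by
      rw [hεdef, ← hfb, ← hc]
      show (algebraMap O K z)⁻¹ * algebraMap O K (c * z) = algebraMap O K c
      rw [map_mul]
      field_simp
      exact mul_div_cancel_left₀ _ hfz0
    rw [he]
    exact ⟨c, rfl⟩
  · intro φ
    have hsingle : ∀ (k : Fin N) (b : O), b ∈ μ ^ (k : ℕ) →
        (Pi.single k (f b) : Fin N → K) ∈ AN := by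
      intro k b hb
      refine (hANmem _).mpr fun j => ?_
      rcases eq_or_ne j k with rfl | hjk
      · exact ⟨b, hb, by simp⟩
      · exact ⟨0, Ideal.zero_mem _, by
          rw [Pi.single_eq_of_ne hjk]; exact map_zero (algebraMap O K)⟩
    let elem : ∀ (k : Fin N) (b : O), b ∈ μ ^ (k : ℕ) → AN :=
      fun k b hb => ⟨Pi.single k (f b), hsingle k b hb⟩
    have helem : ∀ (k : Fin N) (b : O) (hb : b ∈ μ ^ (k : ℕ)),
        ((elem k b hb : AN) : Fin N → K) = Pi.single k (f b) := fun _ _ _ => rfl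
    have hb₀ : ∀ k : Fin N, a ^ (k : ℕ) ∈ μ ^ (k : ℕ) :=
      fun k => Ideal.pow_mem_pow haμ _
    have hfa : ∀ k : Fin N, f (a ^ (k : ℕ)) ≠ 0 :=
      fun k h => pow_ne_zero _ ha0 (finj (h.trans (map_zero (algebraMap O K)).symm))
    let c : Fin N → K := fun k => f (φ (elem k (a ^ (k : ℕ)) (hb₀ k))) / f (a ^ (k : ℕ))
    have hcdef : ∀ k, c k = f (φ (elem k (a ^ (k : ℕ)) (hb₀ k))) / f (a ^ (k : ℕ)) :=
      fun _ => rfl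
    have hkey : ∀ (k : Fin N) (b : O) (hb : b ∈ μ ^ (k : ℕ)),
        f (φ (elem k b hb)) = c k * f b := by
      intro k b hb
      have h1 : (a ^ (k : ℕ)) • (elem k b hb) = b • (elem k (a ^ (k : ℕ)) (hb₀ k)) := by
        apply Subtype.ext
        show (a ^ (k : ℕ)) • (Pi.single k (f b) : Fin N → K)
            = b • (Pi.single k (f (a ^ (k : ℕ))) : Fin N → K)
        funext j
        simp only [Pi.smul_apply, Algebra.smul_def, Pi.single_apply]
        split
        · rw [← hfmul, ← hfmul, mul_comm]
        · simp
      have h2 : (a ^ (k : ℕ)) * φ (elem k b hb) = b * φ (elem k (a ^ (k : ℕ)) (hb₀ k)) := by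
        have := congrArg φ h1
        simpa [smul_eq_mul] using this
      have h3 : f (a ^ (k : ℕ)) * f (φ (elem k b hb))
          = f b * f (φ (elem k (a ^ (k : ℕ)) (hb₀ k))) := by
        rw [← map_mul, ← map_mul, h2]
      rw [hcdef, div_mul_eq_mul_div, eq_div_iff (hfa k)]
      linear_combination h3
    -- the candidate element
    let xv : Fin N → K := fun j => f z * c (sig j)
    have hxvdef : ∀ j, xv j = f z * c (sig j) := fun _ => rfl
    have hxmem : xv ∈ AN := by
      refine (hANmem _).mpr fun j => ?_
      have hzmem : z ∈ μ ^ ((sig j : Fin N) : ℕ) * μ ^ (j : ℕ) := by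
        rw [← pow_add, show ((sig j : Fin N) : ℕ) + (j : ℕ) = N - 1 by
          have := hsig j; omega, hz]
        exact Ideal.mem_span_singleton_self z
      have hgen : ∀ w ∈ μ ^ ((sig j : Fin N) : ℕ) * μ ^ (j : ℕ),
          ∃ b ∈ μ ^ (j : ℕ), f b = f w * c (sig j) := by
        intro w hw
        refine Submodule.mul_induction_on hw ?_ ?_
        · intro m hm n hn
          refine ⟨n * φ (elem (sig j) m hm), Ideal.mul_mem_right _ _ hn, ?_⟩
          rw [hfmul, hkey (sig j) m hm, hfmul]
          ring
        · rintro w1 w2 ⟨b1, hb1, e1⟩ ⟨b2, hb2, e2⟩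
          exact ⟨b1 + b2, Ideal.add_mem _ hb1 hb2, by rw [hfadd, e1, e2, hfadd]; ring⟩
      obtain ⟨b, hb, hfb⟩ := hgen z hzmem
      exact ⟨b, hb, hfb⟩
    -- computation of ε ∘ truncMul
    have hinner : ∀ (u v : Fin N → K) (i : Fin N),
        (∑ k : Fin N, if (i : ℕ) + (k : ℕ) = N - 1 then u i * v k else 0)
          = u i * v (sig i) := by
      intro u v i
      rw [Finset.sum_eq_single (sig i)]
      · rw [if_pos (hsig i)]
      · intro k _ hk
        rw [if_neg]
        intro h
        exact hk (Fin.ext (by have := hsig i; omega))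
      · simp
    have htr : ∀ u v : Fin N → K,
        ε (truncMul u v) = (f z)⁻¹ * ∑ i : Fin N, u i * v (sig i) := by
      intro u v
      have e1 : ε (truncMul u v) = (f z)⁻¹ * ∑ i : Fin N, ∑ k : Fin N,
          (if (i : ℕ) + (k : ℕ) = N - 1 then u i * v k else 0) := rfl
      rw [e1]
      congr 1
      exact Finset.sum_congr rfl fun i _ => hinner u v i
    -- decomposition of elements of AN
    have hdecomp : ∀ (y : AN) (d : Fin N → O) (hd : ∀ j : Fin N, d j ∈ μ ^ (j : ℕ)),
        (∀ j : Fin N, f (d j) = y.1 j) → y = ∑ k : Fin N, elem k (d k) (hd k) := by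
      intro y d hd hfd
      apply Subtype.ext
      have h1 : ((∑ k : Fin N, elem k (d k) (hd k) : AN) : Fin N → K)
          = ∑ k : Fin N, (Pi.single k (f (d k)) : Fin N → K) := by
        rw [AddSubmonoidClass.coe_finset_sum]
      rw [h1]
      have h2 : (fun k : Fin N => (Pi.single k (f (d k)) : Fin N → K))
          = fun k => Pi.single k (y.1 k) := by
        funext k; rw [hfd]
      rw [h2, Finset.univ_sum_single]
    refine ⟨⟨xv, hxmem⟩, ?_, ?_⟩
    · intro y
      show f (φ y) = ε (truncMul xv (y : Fin N → K))
      obtain ⟨d, hd, hfd⟩ : ∃ d : Fin N → O, ∃ _ : (∀ j : Fin N, d j ∈ μ ^ (j : ℕ)),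
          ∀ j : Fin N, f (d j) = y.1 j := by
        choose d hd hfd using (hANmem y.1).mp y.2
        exact ⟨d, hd, hfd⟩
      have hy := hdecomp y d hd hfd
      have lhs : f (φ y) = ∑ k : Fin N, c k * y.1 k := by
        rw [congrArg φ hy, map_sum, hfsum]
        refine Finset.sum_congr rfl fun k _ => ?_
        rw [hkey k (d k) (hd k), hfd]
      rw [htr, lhs]
      have : ∀ i : Fin N, xv i * y.1 (sig i) = f z * (c (sig i) * y.1 (sig i)) := by
        intro i; rw [hxvdef]; ring
      rw [Finset.sum_congr rfl fun i _ => this i, ← Finset.mul_sum,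
        inv_mul_cancel_left₀ hfz0]
      exact (Fintype.sum_bijective sig hsigsig.bijective _ _ fun i => rfl).symm
    · intro x2 hx2
      apply Subtype.ext
      funext j
      have hk := hx2 (elem (sig j) (a ^ ((sig j : Fin N) : ℕ)) (hb₀ (sig j)))
      rw [hkey (sig j) (a ^ ((sig j : Fin N) : ℕ)) (hb₀ (sig j)), htr,
        helem (sig j) (a ^ ((sig j : Fin N) : ℕ)) (hb₀ (sig j))] at hk
      have hsum : (∑ i : Fin N, (x2 : Fin N → K) i *
          (Pi.single (sig j) (f (a ^ ((sig j : Fin N) : ℕ))) : Fin N → K) (sig i))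
          = (x2 : Fin N → K) j * f (a ^ ((sig j : Fin N) : ℕ)) := by
        rw [Finset.sum_eq_single j]
        · rw [Pi.single_eq_same]
        · intro i _ hij
          rw [Pi.single_eq_of_ne, mul_zero]
          intro h
          exact hij (by rw [← hsigsig i, h, hsigsig j])
        · simp
      rw [hsum] at hk
      have h5 : f z * (c (sig j) * f (a ^ ((sig j : Fin N) : ℕ)))
          = (x2 : Fin N → K) j * f (a ^ ((sig j : Fin N) : ℕ)) := by
        rw [hk, mul_inv_cancel_left₀ hfz0]
      have h4 : (x2 : Fin N → K) j = f z * c (sig j) :=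
        mul_right_cancel₀ (hfa (sig j)) (h5.symm.trans (mul_assoc _ _ _).symm)
      exact h4
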